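/- The composition-lift conjecture is false, witnessed by G_φ and G_ψ: both graphs are path-complete on Σ = {1, 2}, strongly connected, and minimally path-complete (removing any single edge destroys path-completeness), and (ii) holds: for every n ≥ 1, every pair of invertible matrices A₁, A₂ ∈ GL(n, ℝ), and every template V (a family of subsets V_m ⊆ C⁰(ℝ^m; ℝ)) closed under forward composition with invertible linear maps (V ∈ V_m and A ∈ GL(m, ℝ) imply V ∘ A ∈ V_m), if there exist V_a, V_b, V_c ∈ V_n ∩ Lyap₀(ℝⁿ) admissible for G_φ and the maps x ↦ A_i x with γ = 1, then there exist V_{a'}, V_{b'} ∈ V_n ∩ Lyap₀(ℝⁿ) admissible for G_ψ and the same maps with γ = 1; yet (i) fails: the forward composition lift G_φ^∘ does not simulate G_ψ. -/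

import Mathlib

open Filter

/-- A labeled digraph on node type `S` with alphabet `A`, given by its edge set,
is path-complete if every nonempty word is the label sequence of some path. -/
def PathComplete {S A : Type*} (E : Set (S × S × A)) : Prop :=
  ∀ w : List A, w ≠ [] → ∃ s : Fin (w.length + 1) → S,
    ∀ j : Fin w.length, (s j.castSucc, s j.succ, w.get j) ∈ E

/-- `G₁` (edge set `E₁`) simulates `G₂` (edge set `E₂`). -/
def Simulates {S₁ S₂ A : Type*} (E₁ : Set (S₁ × S₁ × A)) (E₂ : Set (S₂ × S₂ × A)) : Prop :=
  ∃ R : S₂ → S₁, ∀ a b i, (a, b, i) ∈ E₂ → (R a, R b, i) ∈ E₁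

/-- Simulation where the simulating graph has node set `V₁` inside ambient type `N₁`. -/
def SimulatesOn {N₁ N₂ A : Type*} (V₁ : Set N₁) (E₁ : Set (N₁ × N₁ × A))
    (E₂ : Set (N₂ × N₂ × A)) : Prop :=
  ∃ R : N₂ → N₁, (∀ s, R s ∈ V₁) ∧ ∀ a b i, (a, b, i) ∈ E₂ → (R a, R b, i) ∈ E₁

/-- Class K∞ function. -/
def IsKInfty (α : ℝ → ℝ) : Prop :=
  Continuous α ∧ StrictMono α ∧ α 0 = 0 ∧ Tendsto α atTop atTop

/-- Membership in `Lyap₀(ℝⁿ)`. -/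
def IsLyap {n : ℕ} (V : EuclideanSpace ℝ (Fin n) → ℝ) : Prop :=
  Continuous V ∧ V 0 = 0 ∧ (∀ x, x ≠ 0 → 0 < V x) ∧
  ∃ α₁ α₂ : ℝ → ℝ, IsKInfty α₁ ∧ IsKInfty α₂ ∧ ∀ x, α₁ ‖x‖ ≤ V x ∧ V x ≤ α₂ ‖x‖

/-- `(V_s)_{s}` together with `γ` is admissible for the graph with edge set `E`
and the switched maps `f`. -/
def Admissible {S A : Type*} {n : ℕ} (E : Set (S × S × A))
    (f : A → EuclideanSpace ℝ (Fin n) → EuclideanSpace ℝ (Fin n))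
    (V : S → EuclideanSpace ℝ (Fin n) → ℝ) (γ : ℝ) : Prop :=
  ∀ a b i, (a, b, i) ∈ E → ∀ x, V a x ≥ γ * V b (f i x)

/-- Edge set of the `T`-sum lift: nodes are multisets of size `T`. -/
def sumLiftEdgesT {S A : Type*} (E : Set (S × S × A)) (T : ℕ) :
    Set (Multiset S × Multiset S × A) :=
  { e | ∃ L : List (S × S), L.length = T ∧ (∀ p ∈ L, (p.1, p.2, e.2.2) ∈ E) ∧
      e.1 = ↑(L.map Prod.fst) ∧ e.2.1 = ↑(L.map Prod.snd) }

/-- Edge set of the sum lift `G^⊕` (union over all `T ≥ 1`). -/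
def sumLiftEdges {S A : Type*} (E : Set (S × S × A)) : Set (Multiset S × Multiset S × A) :=
  ⋃ T ∈ Set.Ici 1, sumLiftEdgesT E T

/-- Edge set of the `T`-forward composition lift `G^{∘T}`; a word `(j₁, …, j_T)` is
encoded as the list `[j₁, …, j_T]`.  For `T = 0` this is `G` itself (with empty words). -/
def fwdLiftEdges {S A : Type*} (E : Set (S × S × A)) :
    ℕ → Set ((S × List A) × (S × List A) × A)
  | 0 => { e | ∃ (a b : S) (i : A), (a, b, i) ∈ E ∧ e = ((a, []), (b, []), i) }
  | T + 1 => { e | ∃ (a b : S) (i : A) (l : List A) (jT : A), (a, b, i) ∈ E ∧ l.length = T ∧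
      e = ((a, l ++ [jT]), (b, i :: l), jT) }

/-- Edge set of the `T`-backward composition lift `G^{∘-T}`. -/
def bwdLiftEdges {S A : Type*} (E : Set (S × S × A)) :
    ℕ → Set ((S × List A) × (S × List A) × A)
  | 0 => { e | ∃ (a b : S) (i : A), (a, b, i) ∈ E ∧ e = ((a, []), (b, []), i) }
  | T + 1 => { e | ∃ (a b : S) (i : A) (l : List A) (jT : A), (a, b, i) ∈ E ∧ l.length = T ∧
      e = ((a, i :: l), (b, l ++ [jT]), jT) }

/-- The underlying undirected graph on node set `V` with labeled edge set `E` is connected. -/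
def ConnectedOn {N A : Type*} (V : Set N) (E : Set (N × N × A)) : Prop :=
  ∀ x ∈ V, ∀ y ∈ V,
    Relation.ReflTransGen (fun u v => ∃ i, (u, v, i) ∈ E ∨ (v, u, i) ∈ E) x y

/-- Transpose of a labeled digraph (reverse all edges). -/
def transposeEdges {S A : Type*} (E : Set (S × S × A)) : Set (S × S × A) :=
  { e | (e.2.1, e.1, e.2.2) ∈ E }

/-- Strong connectedness of a labeled digraph. -/
def StronglyConnectedEdges {S A : Type*} (E : Set (S × S × A)) : Prop :=
  ∀ x y : S, Relation.ReflTransGen (fun u v => ∃ i, (u, v, i) ∈ E) x y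

/-- Graph `G_φ`: nodes `a = 0`, `b = 1`, `c = 2`; labels `1 = 0`, `2 = 1`. -/
def GphiEdges : Set (Fin 3 × Fin 3 × Fin 2) :=
  {(0, 0, 0), (0, 1, 0), (1, 0, 1), (0, 2, 1), (2, 0, 1)}

/-- Graph `G_ψ`: nodes `a' = 0`, `b' = 1`; labels `1 = 0`, `2 = 1`. -/
def GpsiEdges : Set (Fin 2 × Fin 2 × Fin 2) :=
  {(0, 0, 0), (0, 1, 0), (0, 1, 1), (1, 0, 1)}



/-- node choice for Gψ -/
def nodePsi : List (Fin 2) → Fin 2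
  | [] => 0
  | (0 :: _) => 0
  | (1 :: rest) => if nodePsi rest = 0 then 1 else 0

lemma nodePsi_step (i : Fin 2) (rest : List (Fin 2)) :
    (nodePsi (i :: rest), nodePsi rest, i) ∈ GpsiEdges := by
  fin_cases i
  · simp only [nodePsi]
    rcases Fin.exists_fin_two.mp ⟨nodePsi rest, rfl⟩ with h | h <;>
      simp [GpsiEdges, h]
  · show (nodePsi (1 :: rest), _, _) ∈ _
    by_cases h : nodePsi rest = 0
    · simp [nodePsi, GpsiEdges, h]
    · simp [nodePsi, GpsiEdges, h, Fin.eq_one_of_ne_zero _ h]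

lemma pathComplete_psi : PathComplete GpsiEdges := by
  intro w _
  refine ⟨fun j => nodePsi (w.drop j.1), fun j => ?_⟩
  have hd : w.drop j.1 = w.get j :: w.drop (j.1 + 1) := List.drop_eq_getElem_cons j.2
  simp only [Fin.coe_castSucc, Fin.val_succ, hd]
  exact nodePsi_step _ _


/-- node choice for Gφ; the Bool records whether the previous letter was `1`. -/
def nodePhi : Bool → List (Fin 2) → Fin 3
  | _, [] => 0
  | _, (0 :: _) => 0
  | p, (1 :: rest) => if nodePhi true rest = 0 then (if p then 2 else 1) else 0

lemma nodePhi_true_ne_one : ∀ rest, nodePhi true rest ≠ 1 := by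
  intro rest
  match rest with
  | [] => simp [nodePhi]
  | (0 :: r) => simp [nodePhi]
  | (1 :: r) => by_cases h : nodePhi true r = 0 <;> simp [nodePhi, h]

lemma nodePhi_false_ne_two : ∀ rest, nodePhi false rest ≠ 2 := by
  intro rest
  match rest with
  | [] => simp [nodePhi]
  | (0 :: r) => simp [nodePhi]
  | (1 :: r) => by_cases h : nodePhi true r = 0 <;> simp [nodePhi, h]

lemma fin3_cases (t : Fin 3) : t = 0 ∨ t = 1 ∨ t = 2 := by omega

lemma nodePhi_step (p : Bool) (i : Fin 2) (rest : List (Fin 2)) :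
    (nodePhi p (i :: rest), nodePhi (i = 1) rest, i) ∈ GphiEdges := by
  rcases Fin.exists_fin_two.mp ⟨i, rfl⟩ with rfl | rfl
  · -- letter 0: source is 0, target is nodePhi false rest ∈ {0,1}
    have h2 := nodePhi_false_ne_two rest
    have hs : nodePhi p ((0 : Fin 2) :: rest) = 0 := by cases p <;> rfl
    have hdec : (decide ((0:Fin 2) = 1)) = false := by decide
    rw [hs, hdec]
    rcases fin3_cases (nodePhi false rest) with h | h | h <;> simp [GphiEdges, h] <;>
      exact absurd h h2
  · have hdec : (decide ((1:Fin 2) = 1)) = true := by decide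
    rw [hdec]
    have h1 := nodePhi_true_ne_one rest
    have hsrc : nodePhi p ((1:Fin 2) :: rest)
        = if nodePhi true rest = 0 then (if p then 2 else 1) else 0 := by
      cases p <;> rfl
    rw [hsrc]
    rcases fin3_cases (nodePhi true rest) with h | h | h
    · rw [h]; cases p <;> simp [GphiEdges]
    · exact absurd h h1
    · rw [h]; simp [GphiEdges]

lemma pathComplete_phi : PathComplete GphiEdges := by
  intro w _
  refine ⟨fun j => nodePhi (decide (j.1 ≠ 0) && (decide (w.getD (j.1 - 1) 0 = 1))) (w.drop j.1),
    fun j => ?_⟩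
  have hd : w.drop j.1 = w.get j :: w.drop (j.1 + 1) := List.drop_eq_getElem_cons j.2
  simp only [Fin.coe_castSucc, Fin.val_succ, hd]
  have hsucc : (decide (j.1 + 1 ≠ 0) && (decide (w.getD (j.1 + 1 - 1) 0 = 1))) = decide (w.get j = 1) := by
    have : w.getD (j.1 + 1 - 1) 0 = w.get j := by
      simp [List.getD_eq_getElem?_getD, List.getElem?_eq_getElem j.2]
    simp [this]
  rw [hsucc]
  exact nodePhi_step _ _ _


instance : DecidablePred (· ∈ GphiEdges) := fun x =>
  decidable_of_iff (x = (0,0,0) ∨ x = (0,1,0) ∨ x = (1,0,1) ∨ x = (0,2,1) ∨ x = (2,0,1))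
    (by simp [GphiEdges, Set.mem_insert_iff])

instance : DecidablePred (· ∈ GpsiEdges) := fun x =>
  decidable_of_iff (x = (0,0,0) ∨ x = (0,1,0) ∨ x = (0,1,1) ∨ x = (1,0,1))
    (by simp [GpsiEdges, Set.mem_insert_iff])

instance decDiff {α : Type*} (A B : Set α) [DecidablePred (· ∈ A)] [DecidablePred (· ∈ B)] :
    DecidablePred (· ∈ A \ B) := fun x =>
  decidable_of_iff (x ∈ A ∧ x ∉ B) Iff.rfl

lemma sc_phi : StronglyConnectedEdges GphiEdges := by
  intro x y
  have e01 : Relation.ReflTransGen (fun u v => ∃ i, (u, v, i) ∈ GphiEdges) 0 1 :=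
    Relation.ReflTransGen.single ⟨0, by simp [GphiEdges]⟩
  have e02 : Relation.ReflTransGen (fun u v => ∃ i, (u, v, i) ∈ GphiEdges) 0 2 :=
    Relation.ReflTransGen.single ⟨1, by simp [GphiEdges]⟩
  have e10 : Relation.ReflTransGen (fun u v => ∃ i, (u, v, i) ∈ GphiEdges) 1 0 :=
    Relation.ReflTransGen.single ⟨1, by simp [GphiEdges]⟩
  have e20 : Relation.ReflTransGen (fun u v => ∃ i, (u, v, i) ∈ GphiEdges) 2 0 :=
    Relation.ReflTransGen.single ⟨1, by simp [GphiEdges]⟩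
  fin_cases x <;> fin_cases y <;>
    first
      | exact Relation.ReflTransGen.refl
      | assumption
      | exact e10.trans e01
      | exact e10.trans e02
      | exact e20.trans e01
      | exact e20.trans e02

lemma sc_psi : StronglyConnectedEdges GpsiEdges := by
  intro x y
  have e01 : Relation.ReflTransGen (fun u v => ∃ i, (u, v, i) ∈ GpsiEdges) 0 1 :=
    Relation.ReflTransGen.single ⟨0, by simp [GpsiEdges]⟩
  have e10 : Relation.ReflTransGen (fun u v => ∃ i, (u, v, i) ∈ GpsiEdges) 1 0 :=
    Relation.ReflTransGen.single ⟨1, by simp [GpsiEdges]⟩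
  fin_cases x <;> fin_cases y <;>
    first
      | exact Relation.ReflTransGen.refl
      | assumption
      | exact e10.trans e01
      | exact e01.trans e10

lemma min_phi : ∀ e ∈ GphiEdges, ¬ PathComplete (GphiEdges \ {e}) := by
  intro e he
  have he' : e = (0,0,0) ∨ e = (0,1,0) ∨ e = (1,0,1) ∨ e = (0,2,1) ∨ e = (2,0,1) := by
    simpa [GphiEdges, Set.mem_insert_iff] using he
  rcases he' with rfl | rfl | rfl | rfl | rfl
  · intro h; exact absurd (h [0,0] (by simp)) (by decide)
  · intro h; exact absurd (h [0,1,0] (by simp)) (by decide)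
  · intro h; exact absurd (h [0,1,0] (by simp)) (by decide)
  · intro h; exact absurd (h [1,1] (by simp)) (by decide)
  · intro h; exact absurd (h [1,1,0] (by simp)) (by decide)

lemma min_psi : ∀ e ∈ GpsiEdges, ¬ PathComplete (GpsiEdges \ {e}) := by
  intro e he
  have he' : e = (0,0,0) ∨ e = (0,1,0) ∨ e = (0,1,1) ∨ e = (1,0,1) := by
    simpa [GpsiEdges, Set.mem_insert_iff] using he
  rcases he' with rfl | rfl | rfl | rfl
  · intro h; exact absurd (h [0,0] (by simp)) (by decide)
  · intro h; exact absurd (h [0,1,0] (by simp)) (by decide)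
  · intro h; exact absurd (h [1,1] (by simp)) (by decide)
  · intro h; exact absurd (h [1,0] (by simp)) (by decide)


open Filter

lemma isKInfty_scale {α : ℝ → ℝ} (hα : IsKInfty α) {c : ℝ} (hc : 0 < c) :
    IsKInfty (fun r => α (c * r)) := by
  obtain ⟨hcont, hmono, h0, htop⟩ := hα
  refine ⟨hcont.comp (continuous_const.mul continuous_id), ?_, by simpa, ?_⟩
  · intro x y hxy
    exact hmono (by nlinarith)
  · exact htop.comp (Tendsto.const_mul_atTop hc tendsto_id)

lemma isLyap_comp {n : ℕ} {V : EuclideanSpace ℝ (Fin n) → ℝ} (hV : IsLyap V)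
    (B : EuclideanSpace ℝ (Fin n) ≃L[ℝ] EuclideanSpace ℝ (Fin n)) :
    IsLyap (fun x => V (B x)) := by
  obtain ⟨hcont, h0, hpos, α₁, α₂, hα₁, hα₂, hb⟩ := hV
  set K : ℝ := max ‖(B.symm : EuclideanSpace ℝ (Fin n) →L[ℝ] EuclideanSpace ℝ (Fin n))‖ 1 with hK
  set C : ℝ := max ‖(B : EuclideanSpace ℝ (Fin n) →L[ℝ] EuclideanSpace ℝ (Fin n))‖ 1 with hC
  have hKpos : (0:ℝ) < K := lt_of_lt_of_le one_pos (le_max_right _ _)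
  have hCpos : (0:ℝ) < C := lt_of_lt_of_le one_pos (le_max_right _ _)
  have hlow : ∀ x : EuclideanSpace ℝ (Fin n), K⁻¹ * ‖x‖ ≤ ‖B x‖ := by
    intro x
    have h1 : ‖x‖ ≤ ‖(B.symm : EuclideanSpace ℝ (Fin n) →L[ℝ] EuclideanSpace ℝ (Fin n))‖ * ‖B x‖ := by
      have := (B.symm : EuclideanSpace ℝ (Fin n) →L[ℝ] EuclideanSpace ℝ (Fin n)).le_opNorm (B x)
      simpa only [ContinuousLinearEquiv.coe_coe, ContinuousLinearEquiv.symm_apply_apply]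
        using this
    have h2 : ‖x‖ ≤ K * ‖B x‖ :=
      h1.trans (mul_le_mul_of_nonneg_right (le_max_left _ _) (norm_nonneg _))
    rw [inv_mul_le_iff₀ hKpos]
    exact h2
  have hup : ∀ x : EuclideanSpace ℝ (Fin n), ‖B x‖ ≤ C * ‖x‖ := by
    intro x
    have := (B : EuclideanSpace ℝ (Fin n) →L[ℝ] EuclideanSpace ℝ (Fin n)).le_opNorm x
    have h3 : ‖B x‖ ≤ ‖(B : EuclideanSpace ℝ (Fin n) →L[ℝ] EuclideanSpace ℝ (Fin n))‖ * ‖x‖ := by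
      simpa only [ContinuousLinearEquiv.coe_coe] using this
    exact h3.trans (mul_le_mul_of_nonneg_right (le_max_left _ _) (norm_nonneg _))
  refine ⟨hcont.comp B.continuous, by simpa using h0, ?_, fun r => α₁ (K⁻¹ * r),
    fun r => α₂ (C * r), isKInfty_scale hα₁ (by positivity), isKInfty_scale hα₂ hCpos, ?_⟩
  · intro x hx
    exact hpos _ (by simpa using hx)
  · intro x
    constructor
    · exact le_trans (hα₁.2.1.monotone (hlow x)) (hb (B x)).1
    · exact le_trans (hb (B x)).2 (hα₂.2.1.monotone (hup x))


lemma part_ii (n : ℕ) (hn : 1 ≤ n)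
    (A₁ A₂ : EuclideanSpace ℝ (Fin n) ≃L[ℝ] EuclideanSpace ℝ (Fin n))
    (𝒱 : (m : ℕ) → Set (EuclideanSpace ℝ (Fin m) → ℝ))
    (hcont : ∀ m, ∀ W ∈ 𝒱 m, Continuous W)
    (hclosed : ∀ m, ∀ W ∈ 𝒱 m,
      ∀ B : EuclideanSpace ℝ (Fin m) ≃L[ℝ] EuclideanSpace ℝ (Fin m),
        (fun x => W (B x)) ∈ 𝒱 m)
    (h : ∃ V : Fin 3 → EuclideanSpace ℝ (Fin n) → ℝ,
        (∀ s, V s ∈ 𝒱 n ∧ IsLyap (V s)) ∧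
        Admissible GphiEdges (fun i x => if i = 0 then A₁ x else A₂ x) V 1)
    (hlyapcomp : ∀ (V : EuclideanSpace ℝ (Fin n) → ℝ), IsLyap V →
      ∀ B : EuclideanSpace ℝ (Fin n) ≃L[ℝ] EuclideanSpace ℝ (Fin n), IsLyap (fun x => V (B x))) :
    ∃ V' : Fin 2 → EuclideanSpace ℝ (Fin n) → ℝ,
        (∀ s, V' s ∈ 𝒱 n ∧ IsLyap (V' s)) ∧
        Admissible GpsiEdges (fun i x => if i = 0 then A₁ x else A₂ x) V' 1 := by
  obtain ⟨V, hV, hadm⟩ := h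
  -- the edge inequalities of G_φ
  have h00 : ∀ x, V 0 x ≥ V 0 (A₁ x) := by
    have := hadm 0 0 0 (by simp [GphiEdges]); simpa using this
  have h01 : ∀ x, V 0 x ≥ V 1 (A₁ x) := by
    have := hadm 0 1 0 (by simp [GphiEdges]); simpa using this
  have h10 : ∀ x, V 1 x ≥ V 0 (A₂ x) := by
    have := hadm 1 0 1 (by simp [GphiEdges]); simpa using this
  have h02 : ∀ x, V 0 x ≥ V 2 (A₂ x) := by
    have := hadm 0 2 1 (by simp [GphiEdges]); simpa using this
  have h20 : ∀ x, V 2 x ≥ V 0 (A₂ x) := by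
    have := hadm 2 0 1 (by simp [GphiEdges]); simpa using this
  refine ⟨![V 0, fun x => V 0 (A₂ x)], ?_, ?_⟩
  · intro s
    fin_cases s
    · exact ⟨(hV 0).1, (hV 0).2⟩
    · exact ⟨hclosed n (V 0) (hV 0).1 A₂, hlyapcomp (V 0) (hV 0).2 A₂⟩
  · intro a b i hab x
    have hab' : (a,b,i) = (0,0,0) ∨ (a,b,i) = ((0:Fin 2),(1:Fin 2),(0:Fin 2))
        ∨ (a,b,i) = (0,1,1) ∨ (a,b,i) = (1,0,1) := by
      simpa [GpsiEdges, Set.mem_insert_iff] using hab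
    rcases hab' with h' | h' | h' | h' <;>
      obtain ⟨rfl, rfl, rfl⟩ := Prod.mk.injEq .. ▸ (by
        simpa [Prod.ext_iff] using h' : a = _ ∧ b = _ ∧ i = _) <;>
      simp only [Matrix.cons_val_zero, Matrix.cons_val_one, Matrix.head_cons, one_mul,
        if_pos, if_neg, ge_iff_le]
    · simpa using h00 x
    · have := le_trans (h10 (A₁ x)) (h01 x)
      simpa using this
    · have := le_trans (h20 (A₂ x)) (h02 x)
      simpa using this
    · simp


lemma not_sim : ¬ SimulatesOn (Set.univ : Set (Fin 3 × List (Fin 2)))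
    (⋃ T : ℕ, fwdLiftEdges GphiEdges T) GpsiEdges := by
  rintro ⟨R, -, hR⟩
  -- the self-loop (0,0,0) of Gψ
  have h000 := hR 0 0 0 (by simp [GpsiEdges])
  have h011 := hR 0 1 1 (by simp [GpsiEdges])
  have h010 := hR 0 1 0 (by simp [GpsiEdges])
  rw [Set.mem_iUnion] at h000 h011 h010
  obtain ⟨T₀, hT₀⟩ := h000
  -- Step 1: R 0 = (0, []) (list empty, node 0)
  have hR0 : R 0 = (0, ([] : List (Fin 2))) := by
    -- first: R 0's word cannot end in 0 and in 1 simultaneously etc.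
    rcases T₀ with _ | T₀
    · obtain ⟨a, b, i, hab, he⟩ := hT₀
      simp only [Prod.mk.injEq] at he
      obtain ⟨h1, h2, hi⟩ := he
      have hab2 : a = b := by rw [h1] at h2; exact (Prod.mk.injEq .. ▸ h2).1
      subst hab2; rw [← hi] at hab
      have ha : a = 0 := by
        rcases (show a = 0 ∨ a = 0 ∧ a = 1 by
          simpa [GphiEdges, Set.mem_insert_iff] using hab) with h | ⟨h, -⟩ <;> exact h
      rw [ha] at h1
      exact h1
    · -- self-loop at level T₀+1: word ends with label 0
      obtain ⟨a, b, i, l, jT, hab, hl, he⟩ := hT₀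
      simp only [Prod.mk.injEq] at he
      obtain ⟨h1, h2, hj⟩ := he
      replace hj : jT = 0 := hj.symm
      -- but edge (0,1,1) forces R 0's word to end in 1 or be empty
      obtain ⟨T₁, hT₁⟩ := h011
      rcases T₁ with _ | T₁
      · obtain ⟨a', b', i', hab', he'⟩ := hT₁
        simp only [Prod.mk.injEq] at he'
        obtain ⟨h1', -, -⟩ := he'
        rw [h1] at h1'
        exact absurd (congrArg Prod.snd h1') (by simp)
      · obtain ⟨a', b', i', l', jT', hab', hl', he'⟩ := hT₁
        simp only [Prod.mk.injEq] at he'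
        obtain ⟨h1', -, hj'2⟩ := he'
        have hj' : jT' = 1 := hj'2.symm
        rw [h1] at h1'
        have : l ++ [jT] = l' ++ [jT'] := congrArg Prod.snd h1'
        have hlast : jT = jT' := by
          have := congrArg List.getLast? this
          simpa using this
        rw [hj, hj'] at hlast
        exact absurd hlast (by decide)
  -- Step 2: edge (0,1,1) must be at level 0, forcing R 1 = (2, [])
  obtain ⟨T₁, hT₁⟩ := h011
  have hR1 : R 1 = (2, ([] : List (Fin 2))) := by
    rcases T₁ with _ | T₁
    · obtain ⟨a', b', i', hab', he'⟩ := hT₁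
      simp only [Prod.mk.injEq] at he'
      obtain ⟨h1, h2, hi⟩ := he'
      have ha : a' = 0 := by
        rw [hR0] at h1; exact ((Prod.mk.injEq .. ▸ h1).1).symm
      rw [← hi, ha] at hab'
      -- (0, b', 1) ∈ GphiEdges → b' = 2
      have hb : b' = 2 := by simpa [GphiEdges, Set.mem_insert_iff] using hab'
      rw [hb] at h2
      exact h2
    · obtain ⟨a', b', i', l', jT', hab', hl', he'⟩ := hT₁
      simp only [Prod.mk.injEq] at he'
      obtain ⟨h1, -, -⟩ := he'
      rw [hR0] at h1
      exact absurd (congrArg Prod.snd h1) (by simp)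
  -- Step 3: edge (0,1,0) is impossible
  obtain ⟨T₂, hT₂⟩ := h010
  rcases T₂ with _ | T₂
  · obtain ⟨a', b', i', hab', he'⟩ := hT₂
    simp only [Prod.mk.injEq] at he'
    obtain ⟨h1, h2, hi⟩ := he'
    have ha : a' = 0 := by rw [hR0] at h1; exact ((Prod.mk.injEq .. ▸ h1).1).symm
    have hb : b' = 2 := by rw [hR1] at h2; exact ((Prod.mk.injEq .. ▸ h2).1).symm
    rw [← hi, ha, hb] at hab'
    -- (0, 2, 0) ∉ GphiEdges
    simpa [GphiEdges, Set.mem_insert_iff, Prod.ext_iff] using hab'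
  · obtain ⟨a', b', i', l', jT', hab', hl', he'⟩ := hT₂
    simp only [Prod.mk.injEq] at he'
    obtain ⟨h1, -, -⟩ := he'
    rw [hR0] at h1
    exact absurd (congrArg Prod.snd h1) (by simp)

/-- Conjecture 8.20 is false, witnessed by `G_φ` and `G_ψ`.
Both graphs are path-complete, strongly connected and minimally path-complete; part
(ii) of the conjecture holds: for every dimension, every pair of invertible linear maps
and every template closed under forward composition with invertible linear maps,
admissibility (with `γ = 1`) for `G_φ` implies admissibility for `G_ψ`; yet part (i)
fails: the forward composition lift `G_φ^∘` does not simulate `G_ψ`. -/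
theorem composition_lift_conjecture_false :
    PathComplete GphiEdges ∧ PathComplete GpsiEdges ∧
    StronglyConnectedEdges GphiEdges ∧ StronglyConnectedEdges GpsiEdges ∧
    (∀ e ∈ GphiEdges, ¬ PathComplete (GphiEdges \ {e})) ∧
    (∀ e ∈ GpsiEdges, ¬ PathComplete (GpsiEdges \ {e})) ∧
    (∀ n : ℕ, 1 ≤ n →
      ∀ A₁ A₂ : EuclideanSpace ℝ (Fin n) ≃L[ℝ] EuclideanSpace ℝ (Fin n),
      ∀ 𝒱 : (m : ℕ) → Set (EuclideanSpace ℝ (Fin m) → ℝ),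
        (∀ m, ∀ W ∈ 𝒱 m, Continuous W) →
        (∀ m, ∀ W ∈ 𝒱 m,
          ∀ B : EuclideanSpace ℝ (Fin m) ≃L[ℝ] EuclideanSpace ℝ (Fin m),
            (fun x => W (B x)) ∈ 𝒱 m) →
      (∃ V : Fin 3 → EuclideanSpace ℝ (Fin n) → ℝ,
          (∀ s, V s ∈ 𝒱 n ∧ IsLyap (V s)) ∧
          Admissible GphiEdges (fun i x => if i = 0 then A₁ x else A₂ x) V 1) →
      (∃ V' : Fin 2 → EuclideanSpace ℝ (Fin n) → ℝ,
          (∀ s, V' s ∈ 𝒱 n ∧ IsLyap (V' s)) ∧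
          Admissible GpsiEdges (fun i x => if i = 0 then A₁ x else A₂ x) V' 1)) ∧
    ¬ SimulatesOn (Set.univ : Set (Fin 3 × List (Fin 2)))
        (⋃ T : ℕ, fwdLiftEdges GphiEdges T) GpsiEdges := by
  refine ⟨pathComplete_phi, pathComplete_psi, sc_phi, sc_psi, min_phi, min_psi, ?_, not_sim⟩
  intro n hn A₁ A₂ 𝒱 hcont hclosed h
  exact part_ii n hn A₁ A₂ 𝒱 hcont hclosed h (fun V hV B => isLyap_comp hV B)
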